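/- Let Z be a standard Gaussian random variable and let F be an integrable centered random variable. Suppose there exist constants B₁, B₂ ≥ 0 such that for every h ∈ C_b², |E[h(F)] − E[h(Z)]| ≤ min(4‖h‖_∞, ‖h″‖_∞) · B₁ + ‖h″‖_∞ · B₂, and that 4(B₁ + B₂) ≤ 5. Then the Wasserstein distance satisfies d_W(F, Z) ≤ √( 2(B₁ + B₂)(5 + E|F|) ). -/

import Mathlib

open MeasureTheory ProbabilityTheory Filter
open scoped ENNReal NNReal

noncomputable section

open Set
open scoped Topology

section Stmt9Aux

/-- cube of positive part -/
def stmt9q (x : ℝ) : ℝ := (max x 0) ^ 3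

lemma stmt9q_hasDerivAt (x : ℝ) : HasDerivAt stmt9q (3 * (max x 0) ^ 2) x := by
  rcases lt_trichotomy x 0 with hx | hx | hx
  · have h0 : HasDerivAt (fun _ : ℝ => (0:ℝ)) 0 x := hasDerivAt_const x 0
    have : HasDerivAt stmt9q 0 x := by
      refine h0.congr_of_eventuallyEq ?_
      filter_upwards [IsOpen.mem_nhds isOpen_Iio hx] with y hy
      simp [stmt9q, max_eq_right (le_of_lt (mem_Iio.mp hy))]
    simpa [max_eq_right hx.le] using this
  · subst hx
    rw [hasDerivAt_iff_tendsto_slope]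
    have hb : Tendsto (fun y : ℝ => y ^ 2) (nhdsWithin 0 {(0:ℝ)}ᶜ) (nhds 0) := by
      have h := ((continuous_pow 2).tendsto (0:ℝ)).mono_left
        (nhdsWithin_le_nhds (s := {(0:ℝ)}ᶜ))
      simpa using h
    have : Tendsto (slope stmt9q 0) (nhdsWithin 0 {(0:ℝ)}ᶜ) (nhds 0) := by
      apply squeeze_zero_norm _ hb
      intro y
      rcases eq_or_ne y 0 with rfl | hy
      · simp [slope, stmt9q]
      · have : slope stmt9q 0 y = stmt9q y / y := by
          simp [slope, stmt9q, div_eq_inv_mul]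
        rw [this]
        rw [Real.norm_eq_abs, abs_div]
        have h1 : |stmt9q y| ≤ |y| ^ 3 := by
          have : |max y 0| ≤ |y| := by
            rcases le_total y 0 with h | h
            · simp [max_eq_right h]
            · simp [max_eq_left h]
          calc |stmt9q y| = |max y 0| ^ 3 := by rw [stmt9q, abs_pow]
          _ ≤ |y| ^ 3 := by gcongr
        calc |stmt9q y| / |y| ≤ |y| ^ 3 / |y| := by gcongr
        _ = |y| ^ 2 := by
            rw [pow_succ]
            field_simp
        _ = y ^ 2 := sq_abs y
    simpa using this
  · have h3 : HasDerivAt (fun y : ℝ => y ^ 3) (3 * x ^ 2) x := by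
      simpa using hasDerivAt_pow 3 x
    have : HasDerivAt stmt9q (3 * x ^ 2) x := by
      refine h3.congr_of_eventuallyEq ?_
      filter_upwards [IsOpen.mem_nhds isOpen_Ioi hx] with y hy
      simp [stmt9q, max_eq_left (le_of_lt (mem_Ioi.mp hy))]
    simpa [max_eq_left hx.le] using this

lemma stmt9q'_hasDerivAt (x : ℝ) :
    HasDerivAt (fun x : ℝ => 3 * (max x 0) ^ 2) (6 * max x 0) x := by
  rcases lt_trichotomy x 0 with hx | hx | hx
  · have h0 : HasDerivAt (fun _ : ℝ => (0:ℝ)) 0 x := hasDerivAt_const x 0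
    have : HasDerivAt (fun x : ℝ => 3 * (max x 0) ^ 2) 0 x := by
      refine h0.congr_of_eventuallyEq ?_
      filter_upwards [IsOpen.mem_nhds isOpen_Iio hx] with y hy
      simp [max_eq_right (le_of_lt (mem_Iio.mp hy))]
    simpa [max_eq_right hx.le] using this
  · subst hx
    rw [hasDerivAt_iff_tendsto_slope]
    have hb : Tendsto (fun y : ℝ => 3 * |y|) (nhdsWithin 0 {(0:ℝ)}ᶜ) (nhds 0) := by
      have h : Tendsto (fun y : ℝ => 3 * |y|) (nhds 0) (nhds 0) := by
        have h2 : Tendsto (fun y : ℝ => 3 * |y|) (nhds 0) (nhds (3 * |(0:ℝ)|)) :=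
          (continuous_const.mul continuous_abs).tendsto (0:ℝ)
        simpa using h2
      exact h.mono_left (nhdsWithin_le_nhds (s := {(0:ℝ)}ᶜ))
    have : Tendsto (slope (fun x : ℝ => 3 * (max x 0) ^ 2) 0) (nhdsWithin 0 {(0:ℝ)}ᶜ)
        (nhds 0) := by
      apply squeeze_zero_norm _ hb
      intro y
      rcases eq_or_ne y 0 with rfl | hy
      · simp [slope]
      · have : slope (fun x : ℝ => 3 * (max x 0) ^ 2) 0 y = 3 * (max y 0) ^ 2 / y := by
          simp [slope, div_eq_inv_mul]
        rw [this, Real.norm_eq_abs, abs_div]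
        have h1 : |3 * (max y 0) ^ 2| ≤ 3 * |y| ^ 2 := by
          rw [abs_mul, abs_pow]
          have : |max y 0| ≤ |y| := by
            rcases le_total y 0 with h | h
            · simp [max_eq_right h]
            · simp [max_eq_left h]
          calc |(3:ℝ)| * |max y 0| ^ 2 = 3 * |max y 0| ^ 2 := by norm_num
          _ ≤ 3 * |y| ^ 2 := by gcongr
        calc |3 * max y 0 ^ 2| / |y| ≤ 3 * |y| ^ 2 / |y| := by gcongr
        _ = 3 * |y| := by
            field_simp
    simpa using this
  · have h3 : HasDerivAt (fun y : ℝ => 3 * y ^ 2) (6 * x) x := by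
      have := (hasDerivAt_pow 2 x).const_mul (3:ℝ)
      exact this.congr_deriv (by ring)
    have : HasDerivAt (fun x : ℝ => 3 * (max x 0) ^ 2) (6 * x) x := by
      refine h3.congr_of_eventuallyEq ?_
      filter_upwards [IsOpen.mem_nhds isOpen_Ioi hx] with y hy
      simp [max_eq_left (le_of_lt (mem_Ioi.mp hy))]
    simpa [max_eq_left hx.le] using this

lemma stmt9q_contDiff : ContDiff ℝ 2 stmt9q := by
  have hd1 : deriv stmt9q = fun x => 3 * (max x 0) ^ 2 :=
    funext fun x => (stmt9q_hasDerivAt x).deriv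
  have hd2 : deriv (fun x : ℝ => 3 * (max x 0) ^ 2) = fun x => 6 * max x 0 :=
    funext fun x => (stmt9q'_hasDerivAt x).deriv
  have : (2 : WithTop ℕ∞) = (1 : WithTop ℕ∞) + 1 := by norm_num
  rw [this, contDiff_succ_iff_deriv]
  refine ⟨fun x => (stmt9q_hasDerivAt x).differentiableAt, by simp, ?_⟩
  rw [hd1, contDiff_one_iff_deriv]
  refine ⟨fun x => (stmt9q'_hasDerivAt x).differentiableAt, ?_⟩
  rw [hd2]
  exact continuous_const.mul (continuous_id.max continuous_const)



section KerSect

/-- the mollifier kernel -/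
def stmt9ker (ε : ℝ) (y : ℝ) : ℝ := (35 / (32 * ε)) * stmt9q (1 - (y / ε) ^ 2)

/-- its derivative -/
def stmt9ker' (ε : ℝ) (y : ℝ) : ℝ :=
  (35 / (32 * ε)) * (3 * (max (1 - (y / ε) ^ 2) 0) ^ 2 * (-(2 * y) / ε ^ 2))

variable {ε : ℝ} (hε : 0 < ε)

include hε

lemma stmt9ker_nonneg (y : ℝ) : 0 ≤ stmt9ker ε y := by
  have h1 : 0 ≤ stmt9q (1 - (y / ε) ^ 2) := by
    unfold stmt9q; positivity
  have h2 : (0:ℝ) ≤ 35 / (32 * ε) := by positivity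
  exact mul_nonneg h2 h1

lemma stmt9ker_zero {y : ℝ} (hy : ε ≤ |y|) : stmt9ker ε y = 0 := by
  have h : 1 - (y / ε) ^ 2 ≤ 0 := by
    have h1 : ε ^ 2 ≤ y ^ 2 := by
      rw [← sq_abs y]; gcongr
    have h3 : (y / ε) ^ 2 = y ^ 2 / ε ^ 2 := by ring
    rw [h3]
    have h2 : (1:ℝ) ≤ y ^ 2 / ε ^ 2 := (one_le_div (by positivity)).mpr h1
    linarith
  have hq : stmt9q (1 - (y / ε) ^ 2) = 0 := by
    unfold stmt9q
    rw [max_eq_right h]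
    norm_num
  rw [stmt9ker, hq, mul_zero]

lemma stmt9ker'_zero {y : ℝ} (hy : ε ≤ |y|) : stmt9ker' ε y = 0 := by
  have h : 1 - (y / ε) ^ 2 ≤ 0 := by
    have h1 : ε ^ 2 ≤ y ^ 2 := by
      rw [← sq_abs y]; gcongr
    have h3 : (y / ε) ^ 2 = y ^ 2 / ε ^ 2 := by ring
    rw [h3]
    have h2 : (1:ℝ) ≤ y ^ 2 / ε ^ 2 := (one_le_div (by positivity)).mpr h1
    linarith
  rw [stmt9ker', max_eq_right h]
  norm_num

lemma stmt9ker_hasDerivAt (y : ℝ) : HasDerivAt (stmt9ker ε) (stmt9ker' ε y) y := by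
  have hinner : HasDerivAt (fun y : ℝ => 1 - (y / ε) ^ 2) (-(2 * y) / ε ^ 2) y := by
    have h1 : HasDerivAt (fun y : ℝ => (y / ε) ^ 2) (2 * (y / ε) * (1 / ε)) y := by
      have := (((hasDerivAt_id y).div_const ε).pow 2)
      exact this.congr_deriv (by simp)
    have h2 := (hasDerivAt_const y (1:ℝ)).sub h1
    exact h2.congr_deriv (by ring)
  have h3 := ((stmt9q_hasDerivAt (1 - (y / ε) ^ 2)).comp y hinner).const_mul (35 / (32 * ε))
  exact h3

lemma stmt9ker_deriv : deriv (stmt9ker ε) = stmt9ker' ε :=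
  funext fun y => (stmt9ker_hasDerivAt hε y).deriv

omit hε in
lemma stmt9ker_contDiff : ContDiff ℝ 2 (stmt9ker ε) := by
  have hpoly : ContDiff ℝ 2 (fun y : ℝ => 1 - (y / ε) ^ 2) :=
    contDiff_const.sub ((contDiff_id.div_const ε).pow 2)
  exact contDiff_const.mul (stmt9q_contDiff.comp hpoly)

omit hε in
lemma stmt9ker_continuous : Continuous (stmt9ker ε) :=
  (stmt9ker_contDiff).continuous

omit hε in
lemma stmt9ker'_continuous : Continuous (stmt9ker' ε) := by
  unfold stmt9ker'
  have h1 : Continuous fun y : ℝ => max (1 - (y / ε) ^ 2) 0 :=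
    (continuous_const.sub ((continuous_id.div_const ε).pow 2)).max continuous_const
  fun_prop

lemma stmt9ker_compactSupport : HasCompactSupport (stmt9ker ε) := by
  apply HasCompactSupport.intro (isCompact_Icc (a := -ε) (b := ε))
  intro y hy
  apply stmt9ker_zero hε
  simp only [mem_Icc, not_and_or, not_le] at hy
  rcases hy with h | h
  · rw [abs_of_neg (by linarith)]; linarith
  · rw [abs_of_pos (by linarith)]; linarith

lemma stmt9ker'_compactSupport : HasCompactSupport (stmt9ker' ε) := by
  apply HasCompactSupport.intro (isCompact_Icc (a := -ε) (b := ε))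
  intro y hy
  apply stmt9ker'_zero hε
  simp only [mem_Icc, not_and_or, not_le] at hy
  rcases hy with h | h
  · rw [abs_of_neg (by linarith)]; linarith
  · rw [abs_of_pos (by linarith)]; linarith

lemma stmt9ker_sq_le_on {y : ℝ} (hy : y ∈ uIcc (-ε) ε) : 0 ≤ 1 - (y / ε) ^ 2 := by
  rw [uIcc_of_le (by linarith)] at hy
  have h1 : |y| ≤ ε := abs_le.mpr ⟨hy.1, hy.2⟩
  have h2 : y ^ 2 ≤ ε ^ 2 := by rw [← sq_abs y]; gcongr
  have h3 : (y / ε) ^ 2 = y ^ 2 / ε ^ 2 := by ring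
  rw [h3]
  have h4 := (div_le_one (a := y ^ 2) (b := ε ^ 2) (by positivity)).mpr h2
  linarith

lemma stmt9ker_notIoc {y : ℝ} (hy : y ∉ Ioc (-ε) ε) : ε ≤ |y| := by
  simp only [mem_Ioc, not_and_or, not_lt, not_le] at hy
  rcases hy with h | h
  · rw [abs_of_nonpos (by linarith)]; linarith
  · rw [abs_of_pos (by linarith)]; linarith

lemma stmt9ker_integral : ∫ y, stmt9ker ε y = 1 := by
  have hne : ε ≠ 0 := hε.ne'
  have hsupp : ∀ y ∉ Ioc (-ε) ε, stmt9ker ε y = 0 := fun y hy =>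
    stmt9ker_zero hε (stmt9ker_notIoc hε hy)
  rw [← setIntegral_eq_integral_of_forall_compl_eq_zero hsupp,
    ← intervalIntegral.integral_of_le (by linarith : -ε ≤ ε)]
  have hcongr : EqOn (stmt9ker ε)
      (fun y => (35 / (32 * ε)) * (1 - (y / ε) ^ 2) ^ 3) (uIcc (-ε) ε) := by
    intro y hy
    rw [stmt9ker, stmt9q, max_eq_left (stmt9ker_sq_le_on hε hy)]
  rw [intervalIntegral.integral_congr hcongr]
  have hftc : ∀ y ∈ uIcc (-ε) ε, HasDerivAt
      (fun y : ℝ => (35 / (32 * ε)) * (y - y ^ 3 / ε ^ 2 + (3/5) * y ^ 5 / ε ^ 4 - y ^ 7 / (7 * ε ^ 6)))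
      ((35 / (32 * ε)) * (1 - (y / ε) ^ 2) ^ 3) y := by
    intro y _
    have h1 : HasDerivAt (fun y : ℝ => y - y ^ 3 / ε ^ 2 + (3/5) * y ^ 5 / ε ^ 4 - y ^ 7 / (7 * ε ^ 6))
        (1 - 3 * y ^ 2 / ε ^ 2 + (3/5) * (5 * y ^ 4) / ε ^ 4 - 7 * y ^ 6 / (7 * ε ^ 6)) y := by
      have ha := (hasDerivAt_id y)
      have hb := ((hasDerivAt_pow 3 y).div_const (ε ^ 2))
      have hc := (((hasDerivAt_pow 5 y).const_mul ((3:ℝ)/5)).div_const (ε ^ 4))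
      have hd := ((hasDerivAt_pow 7 y).div_const (7 * ε ^ 6))
      have he := ((ha.sub hb).add hc).sub hd
      refine he.congr_deriv ?_
      all_goals (try push_cast); (try field_simp); (try ring)
    have h2 := h1.const_mul (35 / (32 * ε))
    refine h2.congr_deriv ?_
    all_goals (try push_cast); (try field_simp); (try ring)
  rw [intervalIntegral.integral_eq_sub_of_hasDerivAt hftc
    (Continuous.intervalIntegrable (by fun_prop) _ _)]
  field_simp
  ring

lemma stmt9ker_sq_integral : ∫ y, y ^ 2 * stmt9ker ε y = ε ^ 2 / 9 := by
  have hne : ε ≠ 0 := hε.ne'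
  have hsupp : ∀ y ∉ Ioc (-ε) ε, y ^ 2 * stmt9ker ε y = 0 := by
    intro y hy
    rw [stmt9ker_zero hε (stmt9ker_notIoc hε hy), mul_zero]
  rw [← setIntegral_eq_integral_of_forall_compl_eq_zero hsupp,
    ← intervalIntegral.integral_of_le (by linarith : -ε ≤ ε)]
  have hcongr : EqOn (fun y => y ^ 2 * stmt9ker ε y)
      (fun y => (35 / (32 * ε)) * (y ^ 2 * (1 - (y / ε) ^ 2) ^ 3)) (uIcc (-ε) ε) := by
    intro y hy
    simp only [stmt9ker, stmt9q, max_eq_left (stmt9ker_sq_le_on hε hy)]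
    ring
  rw [intervalIntegral.integral_congr hcongr]
  have hftc : ∀ y ∈ uIcc (-ε) ε, HasDerivAt
      (fun y : ℝ => (35 / (32 * ε)) * (y ^ 3 / 3 - (3/5) * y ^ 5 / ε ^ 2 + (3/7) * y ^ 7 / ε ^ 4 - y ^ 9 / (9 * ε ^ 6)))
      ((35 / (32 * ε)) * (y ^ 2 * (1 - (y / ε) ^ 2) ^ 3)) y := by
    intro y _
    have h1 : HasDerivAt (fun y : ℝ => y ^ 3 / 3 - (3/5) * y ^ 5 / ε ^ 2 + (3/7) * y ^ 7 / ε ^ 4 - y ^ 9 / (9 * ε ^ 6))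
        (3 * y ^ 2 / 3 - (3/5) * (5 * y ^ 4) / ε ^ 2 + (3/7) * (7 * y ^ 6) / ε ^ 4 - 9 * y ^ 8 / (9 * ε ^ 6)) y := by
      have ha := ((hasDerivAt_pow 3 y).div_const 3)
      have hb := (((hasDerivAt_pow 5 y).const_mul ((3:ℝ)/5)).div_const (ε ^ 2))
      have hc := (((hasDerivAt_pow 7 y).const_mul ((3:ℝ)/7)).div_const (ε ^ 4))
      have hd := ((hasDerivAt_pow 9 y).div_const (9 * ε ^ 6))
      have he := ((ha.sub hb).add hc).sub hd
      refine he.congr_deriv ?_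
      all_goals (try push_cast); (try field_simp); (try ring)
    have h2 := h1.const_mul (35 / (32 * ε))
    refine h2.congr_deriv ?_
    all_goals (try push_cast); (try field_simp); (try ring)
  rw [intervalIntegral.integral_eq_sub_of_hasDerivAt hftc
    (Continuous.intervalIntegrable (by fun_prop) _ _)]
  field_simp
  ring

lemma stmt9ker'_abs_integral : ∫ y, |stmt9ker' ε y| = 35 / (16 * ε) := by
  have hne : ε ≠ 0 := hε.ne'
  have hsupp : ∀ y ∉ Ioc (-ε) ε, |stmt9ker' ε y| = 0 := by
    intro y hy
    rw [stmt9ker'_zero hε (stmt9ker_notIoc hε hy), abs_zero]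
  have hcont : Continuous fun y => |stmt9ker' ε y| := (stmt9ker'_continuous (ε := ε)).abs
  rw [← setIntegral_eq_integral_of_forall_compl_eq_zero hsupp,
    ← intervalIntegral.integral_of_le (by linarith : -ε ≤ ε),
    ← intervalIntegral.integral_add_adjacent_intervals
      (a := -ε) (b := 0) (c := ε)
      (hcont.intervalIntegrable _ _) (hcont.intervalIntegrable _ _)]
  have key : ∀ y : ℝ, y ∈ uIcc (-ε) ε →
      stmt9ker' ε y = (35 / (32 * ε)) * (3 * (1 - (y / ε) ^ 2) ^ 2 * (-(2 * y) / ε ^ 2)) := by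
    intro y hy
    rw [stmt9ker', max_eq_left (stmt9ker_sq_le_on hε hy)]
  have hin : ∀ y : ℝ, HasDerivAt (fun y : ℝ => 1 - (y / ε) ^ 2) (-(2 * y) / ε ^ 2) y := by
    intro y
    have h1 : HasDerivAt (fun y : ℝ => (y / ε) ^ 2) (2 * (y / ε) * (1 / ε)) y := by
      have := (((hasDerivAt_id y).div_const ε).pow 2)
      exact this.congr_deriv (by simp)
    have h2 := (hasDerivAt_const y (1:ℝ)).sub h1
    exact h2.congr_deriv (by ring)
  have h1 : (∫ y in (-ε)..0, |stmt9ker' ε y|) = 35 / (32 * ε) := by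
    have hcongr : EqOn (fun y => |stmt9ker' ε y|)
        (fun y => (35 / (32 * ε)) * (3 * (1 - (y / ε) ^ 2) ^ 2 * (-(2 * y) / ε ^ 2)))
        (uIcc (-ε) 0) := by
      intro y hy
      rw [uIcc_of_le (by linarith : -ε ≤ 0)] at hy
      have hy' : y ∈ uIcc (-ε) ε := by
        rw [uIcc_of_le (by linarith : -ε ≤ ε)]
        exact ⟨hy.1, by linarith [hy.2]⟩
      have hker := key y hy'
      have hfac : (0:ℝ) ≤ -(2 * y) / ε ^ 2 :=
        div_nonneg (by linarith [hy.2]) (by positivity)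
      have hnn : 0 ≤ stmt9ker' ε y := by
        rw [hker]
        exact mul_nonneg (by positivity)
          (mul_nonneg (by positivity) hfac)
      simp only
      rw [abs_of_nonneg hnn, hker]
    rw [intervalIntegral.integral_congr hcongr]
    have hftc : ∀ y ∈ uIcc (-ε) 0, HasDerivAt
        (fun y : ℝ => (35 / (32 * ε)) * (1 - (y / ε) ^ 2) ^ 3)
        ((35 / (32 * ε)) * (3 * (1 - (y / ε) ^ 2) ^ 2 * (-(2 * y) / ε ^ 2))) y := by
      intro y _
      have hder := (((hin y).pow 3).const_mul ((35 / (32 * ε))))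
      refine hder.congr_deriv ?_
      all_goals (try push_cast); (try field_simp); (try ring)
    rw [intervalIntegral.integral_eq_sub_of_hasDerivAt hftc
      (Continuous.intervalIntegrable (by fun_prop) _ _)]
    have hz : (1 - (-ε / ε) ^ 2) = 0 := by rw [neg_div, div_self hne]; ring
    rw [hz]
    field_simp
    ring
  have h2 : (∫ y in (0:ℝ)..ε, |stmt9ker' ε y|) = 35 / (32 * ε) := by
    have hcongr : EqOn (fun y => |stmt9ker' ε y|)
        (fun y => -((35 / (32 * ε)) * (3 * (1 - (y / ε) ^ 2) ^ 2 * (-(2 * y) / ε ^ 2))))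
        (uIcc 0 ε) := by
      intro y hy
      rw [uIcc_of_le (by linarith : (0:ℝ) ≤ ε)] at hy
      have hy' : y ∈ uIcc (-ε) ε := by
        rw [uIcc_of_le (by linarith : -ε ≤ ε)]
        exact ⟨by linarith [hy.1], hy.2⟩
      have hker := key y hy'
      have hfac : -(2 * y) / ε ^ 2 ≤ 0 :=
        div_nonpos_of_nonpos_of_nonneg (by linarith [hy.1]) (by positivity)
      have hnp : stmt9ker' ε y ≤ 0 := by
        rw [hker]
        have hpos : (0:ℝ) ≤ (35 / (32 * ε)) * (3 * (1 - (y / ε) ^ 2) ^ 2) := by positivity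
        calc (35 / (32 * ε)) * (3 * (1 - (y / ε) ^ 2) ^ 2 * (-(2 * y) / ε ^ 2))
            = ((35 / (32 * ε)) * (3 * (1 - (y / ε) ^ 2) ^ 2)) * (-(2 * y) / ε ^ 2) := by ring
          _ ≤ 0 := mul_nonpos_of_nonneg_of_nonpos hpos hfac
      simp only
      rw [abs_of_nonpos hnp, hker]
    rw [intervalIntegral.integral_congr hcongr]
    have hftc : ∀ y ∈ uIcc 0 ε, HasDerivAt
        (fun y : ℝ => -(35 / (32 * ε)) * (1 - (y / ε) ^ 2) ^ 3)
        (-((35 / (32 * ε)) * (3 * (1 - (y / ε) ^ 2) ^ 2 * (-(2 * y) / ε ^ 2)))) y := by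
      intro y _
      have hder := (((hin y).pow 3).const_mul (-(35 / (32 * ε))))
      refine hder.congr_deriv ?_
      all_goals (try push_cast); (try field_simp); (try ring)
    rw [intervalIntegral.integral_eq_sub_of_hasDerivAt hftc
      (Continuous.intervalIntegrable (by fun_prop) _ _)]
    have hz : (1 - (ε / ε) ^ 2) = 0 := by rw [div_self hne]; ring
    rw [hz]
    field_simp
    ring
  rw [h1, h2]
  field_simp
  ring


end KerSect

lemma stmt9_gauss_abs_integrable : Integrable (fun x : ℝ => |x|) (gaussianReal 0 1) := by
  rw [gaussianReal_of_var_ne_zero 0 one_ne_zero]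
  rw [integrable_withDensity_iff (measurable_gaussianPDF 0 1)
    (Eventually.of_forall fun x => ENNReal.ofReal_lt_top)]
  have heq : ∀ x : ℝ, (gaussianPDF 0 1 x).toReal = gaussianPDFReal 0 1 x := by
    intro x
    rw [gaussianPDF_def]
    exact ENNReal.toReal_ofReal (gaussianPDFReal_nonneg 0 1 x)
  have hbound : Integrable (fun x : ℝ => (Real.sqrt (2 * Real.pi))⁻¹ *
      Real.exp (-(4⁻¹) * x ^ 2)) volume :=
    (integrable_exp_neg_mul_sq (by norm_num : (0:ℝ) < 4⁻¹)).const_mul _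
  apply Integrable.mono' hbound
  · apply Measurable.aestronglyMeasurable
    exact measurable_abs.mul ((measurable_gaussianPDF 0 1).ennreal_toReal)
  · filter_upwards with x
    rw [heq x, Real.norm_eq_abs, gaussianPDFReal]
    have hpdfpos : (0:ℝ) ≤ (Real.sqrt (2 * Real.pi * (1:NNReal)))⁻¹ *
        Real.exp (-(x - 0) ^ 2 / (2 * (1:NNReal))) := by positivity
    rw [abs_of_nonneg (mul_nonneg (abs_nonneg x) hpdfpos)]
    push_cast
    have hxle : |x| ≤ Real.exp (4⁻¹ * x ^ 2) := by
      have h1 : |x| ≤ 1 + 4⁻¹ * x ^ 2 := by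
        nlinarith [sq_nonneg (|x| - 2), sq_abs x]
      have h2 : 4⁻¹ * x ^ 2 + 1 ≤ Real.exp (4⁻¹ * x ^ 2) := Real.add_one_le_exp _
      linarith
    have hsimp : Real.sqrt (2 * Real.pi * 1) = Real.sqrt (2 * Real.pi) := by norm_num
    rw [hsimp]
    have hc : (0:ℝ) ≤ (Real.sqrt (2 * Real.pi))⁻¹ := by positivity
    calc |x| * ((Real.sqrt (2 * Real.pi))⁻¹ * Real.exp (-(x - 0) ^ 2 / (2 * 1)))
        ≤ Real.exp (4⁻¹ * x ^ 2) * ((Real.sqrt (2 * Real.pi))⁻¹ *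
          Real.exp (-(x - 0) ^ 2 / (2 * 1))) := by
          apply mul_le_mul_of_nonneg_right hxle
          positivity
      _ = (Real.sqrt (2 * Real.pi))⁻¹ *
          (Real.exp (4⁻¹ * x ^ 2) * Real.exp (-(x - 0) ^ 2 / (2 * 1))) := by ring
      _ = (Real.sqrt (2 * Real.pi))⁻¹ * Real.exp (-(4⁻¹) * x ^ 2) := by
          rw [← Real.exp_add]
          congr 1
          ring


set_option maxHeartbeats 1000000 in
/-- One-step estimate: truncate at level `R`, mollify at scale `ε`, apply the
second-order hypothesis. -/
lemma stmt9_step {Ω : Type*} [MeasurableSpace Ω] (P : Measure Ω)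
    [IsProbabilityMeasure P]
    (F : Ω → ℝ) (hFi : Integrable F P)
    (B1 B2 : ℝ) (hB1 : 0 ≤ B1) (hB2 : 0 ≤ B2)
    (hmain : ∀ (h : ℝ → ℝ) (M0 M2 : ℝ), ContDiff ℝ 2 h → (∀ x, |h x| ≤ M0) →
      (∃ C, ∀ x, |deriv h x| ≤ C) → (∀ x, |deriv (deriv h) x| ≤ M2) →
      |∫ ω, h (F ω) ∂P - ∫ x, h x ∂(gaussianReal 0 1)| ≤
        min (4 * M0) M2 * B1 + M2 * B2)
    (gt : ℝ → ℝ) (hgtc : Continuous gt)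
    (hlip : ∀ a b, |gt a - gt b| ≤ |a - b|) (hgt0 : gt 0 = 0)
    {ε : ℝ} (hε : 0 < ε) (R : ℝ) (hR : 0 ≤ R) :
    |∫ ω, gt (F ω) ∂P - ∫ x, gt x ∂(gaussianReal 0 1)| ≤
      2 * (ε / 3) + (35 / (16 * ε)) * (B1 + B2)
      + (∫ ω, max (|F ω| - R) 0 ∂P + ∫ x, max (|x| - R) 0 ∂(gaussianReal 0 1)) := by
  set γ := gaussianReal 0 1 with hγdef
  have hgtabs : ∀ x, |gt x| ≤ |x| := by
    intro x
    have := hlip x 0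
    simpa [hgt0] using this
  set gn : ℝ → ℝ := fun x => max (-R) (min R (gt x)) with hgn
  have hgncont : Continuous gn := continuous_const.max (continuous_const.min hgtc)
  have hgnbd : ∀ x, |gn x| ≤ R := by
    intro x
    rw [abs_le]
    constructor
    · exact le_max_left _ _
    · exact max_le (by linarith) (min_le_left _ _)
  have hgnlip : ∀ a b, |gn a - gn b| ≤ |a - b| := by
    intro a b
    have h1 : |gn a - gn b| ≤ |min R (gt a) - min R (gt b)| := by
      rw [hgn]
      simp only
      rw [max_comm (-R) (min R (gt a)), max_comm (-R) (min R (gt b))]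
      exact abs_max_sub_max_le_abs _ _ _
    have h2 : |min R (gt a) - min R (gt b)| ≤ |gt a - gt b| := by
      have := abs_min_sub_min_le_max R (gt a) R (gt b)
      simpa using this
    exact h1.trans (h2.trans (hlip a b))
  have hgnclose : ∀ x, |gn x - gt x| ≤ max (|x| - R) 0 := by
    intro x
    have hax := hgtabs x
    rcases le_total (gt x) R with h1 | h1
    · rcases le_total (-R) (gt x) with h2 | h2
      · rw [hgn]
        simp only
        rw [min_eq_right h1, max_eq_right h2]
        simpa using le_max_right (|x| - R) 0
      · rw [hgn]
        simp only
        rw [min_eq_right h1, max_eq_left h2]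
        have hb : |(-R) - gt x| = -R - gt x := abs_of_nonneg (by linarith)
        rw [hb]
        have : -gt x ≤ |x| := by
          have := neg_le_abs (gt x)
          linarith
        have hle : -R - gt x ≤ |x| - R := by linarith
        exact hle.trans (le_max_left _ _)
    · rw [hgn]
      simp only
      rw [min_eq_left h1, max_eq_right (by linarith : -R ≤ R)]
      have hb : |R - gt x| = gt x - R := by
        rw [abs_sub_comm]
        exact abs_of_nonneg (by linarith)
      rw [hb]
      have : gt x ≤ |x| := (le_abs_self _).trans hax
      have hle : gt x - R ≤ |x| - R := by linarith
      exact hle.trans (le_max_left _ _)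
  -- the mollified truncation
  set L : ℝ →L[ℝ] ℝ →L[ℝ] ℝ := ContinuousLinearMap.lsmul ℝ ℝ with hL
  set h : ℝ → ℝ := convolution gn (stmt9ker ε) L volume with hh
  set h1f : ℝ → ℝ := convolution gn (stmt9ker' ε) L volume with hh1f
  have hloc : LocallyIntegrable gn volume := hgncont.locallyIntegrable
  have hswap : ∀ (k : ℝ → ℝ) (x : ℝ),
      (∫ t, gn t * k (x - t)) = ∫ y, gn (x - y) * k y := by
    intro k x
    have := MeasureTheory.integral_sub_left_eq_self (fun y => gn (x - y) * k y) volume x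
    simp only [sub_sub_cancel] at this
    exact this
  have hrepr : ∀ x, h x = ∫ y, gn (x - y) * stmt9ker ε y := by
    intro x
    rw [hh, convolution_def]
    simp only [hL, ContinuousLinearMap.lsmul_apply, smul_eq_mul]
    exact hswap _ x
  have h1repr : ∀ x, h1f x = ∫ y, gn (x - y) * stmt9ker' ε y := by
    intro x
    rw [hh1f, convolution_def]
    simp only [hL, ContinuousLinearMap.lsmul_apply, smul_eq_mul]
    exact hswap _ x
  -- integrability of the integrands
  have hψint : Integrable (stmt9ker ε) volume :=
    stmt9ker_continuous.integrable_of_hasCompactSupport (stmt9ker_compactSupport hε)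
  have hψ'absint : Integrable (fun y => |stmt9ker' ε y|) volume :=
    (stmt9ker'_continuous.abs).integrable_of_hasCompactSupport
      ((stmt9ker'_compactSupport hε).comp_left (g := abs) abs_zero)
  have hψsqint : Integrable (fun y => y ^ 2 * stmt9ker ε y) volume := by
    apply Continuous.integrable_of_hasCompactSupport
    · exact (continuous_pow 2).mul stmt9ker_continuous
    · exact (stmt9ker_compactSupport hε).mul_left
  have hint1 : ∀ x, Integrable (fun y => gn (x - y) * stmt9ker ε y) volume := by
    intro x
    apply Continuous.integrable_of_hasCompactSupport
    · exact (hgncont.comp (continuous_const.sub continuous_id)).mul stmt9ker_continuous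
    · exact (stmt9ker_compactSupport hε).mul_left
  have hint1' : ∀ x, Integrable (fun y => gn (x - y) * stmt9ker' ε y) volume := by
    intro x
    apply Continuous.integrable_of_hasCompactSupport
    · exact (hgncont.comp (continuous_const.sub continuous_id)).mul stmt9ker'_continuous
    · exact (stmt9ker'_compactSupport hε).mul_left
  -- boundedness of h
  have hbd : ∀ x, |h x| ≤ R := by
    intro x
    rw [hrepr x]
    calc |∫ y, gn (x - y) * stmt9ker ε y|
        ≤ ∫ y, |gn (x - y) * stmt9ker ε y| := by
          simpa only [Real.norm_eq_abs] using norm_integral_le_integral_norm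
            (fun y => gn (x - y) * stmt9ker ε y)
      _ ≤ ∫ y, R * stmt9ker ε y := by
          apply integral_mono ((hint1 x).abs) (hψint.const_mul R)
          intro y
          dsimp only
          rw [abs_mul, abs_of_nonneg (stmt9ker_nonneg hε y)]
          exact mul_le_mul_of_nonneg_right (hgnbd _) (stmt9ker_nonneg hε y)
      _ = R := by rw [integral_const_mul, stmt9ker_integral hε, mul_one]
  -- smoothness of h
  have hCD : ContDiff ℝ 2 h := by
    have := HasCompactSupport.contDiff_convolution_right (n := 2) L
      (stmt9ker_compactSupport hε) hloc (by exact_mod_cast stmt9ker_contDiff)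
    exact_mod_cast this
  -- first derivative
  have hder1 : ∀ x, HasDerivAt h (h1f x) x := by
    intro x
    have hk1 : ContDiff ℝ 1 (stmt9ker ε) := stmt9ker_contDiff.of_le (by norm_num)
    have := HasCompactSupport.hasDerivAt_convolution_right L hloc
      (stmt9ker_compactSupport hε) hk1 x
    rwa [stmt9ker_deriv hε] at this
  have hderiv_h : deriv h = h1f := funext fun x => (hder1 x).deriv
  have h1bd : ∀ x, |h1f x| ≤ R * (35 / (16 * ε)) := by
    intro x
    rw [h1repr x]
    calc |∫ y, gn (x - y) * stmt9ker' ε y|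
        ≤ ∫ y, |gn (x - y) * stmt9ker' ε y| := by
          simpa only [Real.norm_eq_abs] using norm_integral_le_integral_norm
            (fun y => gn (x - y) * stmt9ker' ε y)
      _ ≤ ∫ y, R * |stmt9ker' ε y| := by
          apply integral_mono ((hint1' x).abs) (hψ'absint.const_mul R)
          intro y
          dsimp only
          rw [abs_mul]
          exact mul_le_mul_of_nonneg_right (hgnbd _) (abs_nonneg _)
      _ = R * (35 / (16 * ε)) := by rw [integral_const_mul, stmt9ker'_abs_integral hε]
  have h1lip : ∀ x z, |h1f x - h1f z| ≤ (35 / (16 * ε)) * |x - z| := by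
    intro x z
    rw [h1repr x, h1repr z, ← integral_sub (hint1' x) (hint1' z)]
    have heq : ∀ y, gn (x - y) * stmt9ker' ε y - gn (z - y) * stmt9ker' ε y
        = (gn (x - y) - gn (z - y)) * stmt9ker' ε y := fun y => by ring
    simp only [heq]
    calc |∫ y, (gn (x - y) - gn (z - y)) * stmt9ker' ε y|
        ≤ ∫ y, |(gn (x - y) - gn (z - y)) * stmt9ker' ε y| := by
          simpa only [Real.norm_eq_abs] using norm_integral_le_integral_norm
            (fun y => (gn (x - y) - gn (z - y)) * stmt9ker' ε y)
      _ ≤ ∫ y, |x - z| * |stmt9ker' ε y| := by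
          apply integral_mono _ (hψ'absint.const_mul _)
          · intro y
            dsimp only
            rw [abs_mul]
            apply mul_le_mul_of_nonneg_right _ (abs_nonneg _)
            have := hgnlip (x - y) (z - y)
            have heq2 : x - y - (z - y) = x - z := by ring
            rwa [heq2] at this
          · exact ((hint1' x).sub (hint1' z)).abs.congr
              (Eventually.of_forall fun y => by dsimp only; congr 1; simp only [Pi.sub_apply]; ring)
      _ = (35 / (16 * ε)) * |x - z| := by
          rw [integral_const_mul, stmt9ker'_abs_integral hε]
          ring
  -- second derivative bound
  have hk1' : ContDiff ℝ 1 (stmt9ker' ε) := by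
    have h2 : ContDiff ℝ (1 + 1) (stmt9ker ε) := by
      exact_mod_cast stmt9ker_contDiff
    rw [contDiff_succ_iff_deriv] at h2
    have := h2.2.2
    rwa [stmt9ker_deriv hε] at this
  have hd2bd : ∀ x, |deriv (deriv h) x| ≤ 35 / (16 * ε) := by
    intro x
    rw [hderiv_h]
    have h2d := HasCompactSupport.hasDerivAt_convolution_right L hloc
      (stmt9ker'_compactSupport hε) hk1' x
    have hval := h2d.deriv
    rw [hval]
    have hC : (0:ℝ) ≤ 35 / (16 * ε) := by positivity
    have := h2d.le_of_lip' hC (Eventually.of_forall fun y => by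
      simpa [Real.norm_eq_abs] using h1lip y x)
    simpa [Real.norm_eq_abs] using this
  -- smoothing error
  have hsmooth : ∀ x, |h x - gn x| ≤ ε / 3 := by
    intro x
    have hgnx : gn x = ∫ y, gn x * stmt9ker ε y := by
      rw [integral_const_mul, stmt9ker_integral hε, mul_one]
    rw [hrepr x]
    rw [hgnx]
    rw [← integral_sub (hint1 x) (hψint.const_mul _)]
    have heq : ∀ y, gn (x - y) * stmt9ker ε y - gn x * stmt9ker ε y
        = (gn (x - y) - gn x) * stmt9ker ε y := fun y => by ring
    simp only [heq]
    calc |∫ y, (gn (x - y) - gn x) * stmt9ker ε y|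
        ≤ ∫ y, |(gn (x - y) - gn x) * stmt9ker ε y| := by
          simpa only [Real.norm_eq_abs] using norm_integral_le_integral_norm
            (fun y => (gn (x - y) - gn x) * stmt9ker ε y)
      _ ≤ ∫ y, ((3 / (2 * ε)) * (y ^ 2 * stmt9ker ε y) + (ε / 6) * stmt9ker ε y) := by
          apply integral_mono _ ((hψsqint.const_mul _).add (hψint.const_mul _))
          · intro y
            dsimp only
            have hψnn := stmt9ker_nonneg hε y
            rw [abs_mul, abs_of_nonneg hψnn]
            have hlipb : |gn (x - y) - gn x| ≤ |y| := by
              have := hgnlip (x - y) x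
              have heq2 : x - y - x = -y := by ring
              rwa [heq2, abs_neg] at this
            have hamgm : |y| ≤ (3 / (2 * ε)) * y ^ 2 + ε / 6 := by
              have h6 : 6 * ε * |y| ≤ 9 * y ^ 2 + ε ^ 2 := by
                nlinarith [sq_nonneg (3 * |y| - ε), sq_abs y]
              have heps : (0:ℝ) < 6 * ε := by linarith
              rw [show (3 / (2 * ε)) * y ^ 2 + ε / 6 = (9 * y ^ 2 + ε ^ 2) / (6 * ε) by
                field_simp; ring]
              rw [le_div_iff₀ heps]
              calc |y| * (6 * ε) = 6 * ε * |y| := by ring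
                _ ≤ 9 * y ^ 2 + ε ^ 2 := h6
            calc |gn (x - y) - gn x| * stmt9ker ε y
                ≤ ((3 / (2 * ε)) * y ^ 2 + ε / 6) * stmt9ker ε y :=
                  mul_le_mul_of_nonneg_right (hlipb.trans hamgm) hψnn
              _ = (3 / (2 * ε)) * (y ^ 2 * stmt9ker ε y) + (ε / 6) * stmt9ker ε y := by
                  ring
          · exact (((hint1 x).sub (hψint.const_mul _)).abs).congr
              (Eventually.of_forall fun y => by dsimp only; congr 1; simp only [Pi.sub_apply]; ring)
      _ = ε / 3 := by
          rw [integral_add (hψsqint.const_mul _) (hψint.const_mul _),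
            integral_const_mul, integral_const_mul, stmt9ker_sq_integral hε,
            stmt9ker_integral hε]
          field_simp
          ring
  -- apply the main hypothesis
  have hM : |∫ ω, h (F ω) ∂P - ∫ x, h x ∂γ| ≤ (35 / (16 * ε)) * (B1 + B2) := by
    have := hmain h R (35 / (16 * ε)) hCD hbd
      ⟨R * (35 / (16 * ε)), fun x => by rw [hderiv_h]; exact h1bd x⟩ hd2bd
    calc |∫ ω, h (F ω) ∂P - ∫ x, h x ∂γ|
        ≤ min (4 * R) (35 / (16 * ε)) * B1 + (35 / (16 * ε)) * B2 := this
      _ ≤ (35 / (16 * ε)) * B1 + (35 / (16 * ε)) * B2 :=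
          add_le_add_left (mul_le_mul_of_nonneg_right (min_le_right _ _) hB1) _
      _ = (35 / (16 * ε)) * (B1 + B2) := by ring
  -- pointwise closeness
  have hclose : ∀ x, |gt x - h x| ≤ max (|x| - R) 0 + ε / 3 := by
    intro x
    calc |gt x - h x| ≤ |gt x - gn x| + |gn x - h x| := abs_sub_le _ _ _
      _ ≤ max (|x| - R) 0 + ε / 3 := by
          apply add_le_add
          · rw [abs_sub_comm]; exact hgnclose x
          · rw [abs_sub_comm]; exact hsmooth x
  -- integrabilities wrt P and γ
  have hγprob : IsProbabilityMeasure γ := by rw [hγdef]; infer_instance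
  have hgtF_int : Integrable (fun ω => gt (F ω)) P := by
    apply Integrable.mono' hFi.abs (hgtc.comp_aestronglyMeasurable hFi.1)
    exact Eventually.of_forall fun ω => by
      simpa [Real.norm_eq_abs] using hgtabs (F ω)
  have hhF_int : Integrable (fun ω => h (F ω)) P := by
    apply Integrable.mono' (integrable_const R)
      (hCD.continuous.comp_aestronglyMeasurable hFi.1)
    exact Eventually.of_forall fun ω => by
      simpa [Real.norm_eq_abs] using hbd (F ω)
  have htailF_int : Integrable (fun ω => max (|F ω| - R) 0) P := by
    apply Integrable.mono' hFi.abs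
      (((continuous_abs.sub continuous_const).max continuous_const).comp_aestronglyMeasurable
        hFi.1)
    exact Eventually.of_forall fun ω => by
      rw [Real.norm_eq_abs, abs_of_nonneg (le_max_right _ _)]
      exact max_le (by show |F ω| - R ≤ |F ω|; linarith [abs_nonneg (F ω)]) (abs_nonneg _)
  have hgtγ_int : Integrable gt γ := by
    apply Integrable.mono' stmt9_gauss_abs_integrable hgtc.aestronglyMeasurable
    exact Eventually.of_forall fun x => by
      simpa [Real.norm_eq_abs] using hgtabs x
  have hhγ_int : Integrable h γ := by
    apply Integrable.mono' (integrable_const R) hCD.continuous.aestronglyMeasurable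
    exact Eventually.of_forall fun x => by
      simpa [Real.norm_eq_abs] using hbd x
  have htailγ_int : Integrable (fun x => max (|x| - R) 0) γ := by
    apply Integrable.mono' stmt9_gauss_abs_integrable
      (((continuous_abs.sub continuous_const).max continuous_const).aestronglyMeasurable)
    exact Eventually.of_forall fun x => by
      rw [Real.norm_eq_abs, abs_of_nonneg (le_max_right _ _)]
      exact max_le (by show |x| - R ≤ |x|; linarith [abs_nonneg x]) (abs_nonneg _)
  -- triangle inequality assembly
  have hA : |∫ ω, gt (F ω) ∂P - ∫ ω, h (F ω) ∂P|
      ≤ (∫ ω, max (|F ω| - R) 0 ∂P) + ε / 3 := by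
    rw [← integral_sub hgtF_int hhF_int]
    calc |∫ ω, (gt (F ω) - h (F ω)) ∂P|
        ≤ ∫ ω, |gt (F ω) - h (F ω)| ∂P := by
          simpa only [Real.norm_eq_abs] using norm_integral_le_integral_norm
            (fun ω => gt (F ω) - h (F ω))
      _ ≤ ∫ ω, (max (|F ω| - R) 0 + ε / 3) ∂P := by
          apply integral_mono ((hgtF_int.sub hhF_int).abs)
            (htailF_int.add (integrable_const _))
          intro ω
          simp only [Pi.add_apply, Pi.sub_apply]
          exact hclose (F ω)
      _ = (∫ ω, max (|F ω| - R) 0 ∂P) + ε / 3 := by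
          rw [integral_add htailF_int (integrable_const _), integral_const]
          simp [measure_univ]
  have hC : |∫ x, h x ∂γ - ∫ x, gt x ∂γ|
      ≤ (∫ x, max (|x| - R) 0 ∂γ) + ε / 3 := by
    rw [← integral_sub hhγ_int hgtγ_int]
    calc |∫ x, (h x - gt x) ∂γ|
        ≤ ∫ x, |h x - gt x| ∂γ := by
          simpa only [Real.norm_eq_abs] using norm_integral_le_integral_norm
            (fun x => h x - gt x)
      _ ≤ ∫ x, (max (|x| - R) 0 + ε / 3) ∂γ := by
          apply integral_mono ((hhγ_int.sub hgtγ_int).abs)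
            (htailγ_int.add (integrable_const _))
          intro x
          simp only [Pi.add_apply, Pi.sub_apply]
          rw [abs_sub_comm]
          exact hclose x
      _ = (∫ x, max (|x| - R) 0 ∂γ) + ε / 3 := by
          rw [integral_add htailγ_int (integrable_const _), integral_const]
          simp [measure_univ]
  have hsplit : ∫ ω, gt (F ω) ∂P - ∫ x, gt x ∂γ
      = (∫ ω, gt (F ω) ∂P - ∫ ω, h (F ω) ∂P)
        + (∫ ω, h (F ω) ∂P - ∫ x, h x ∂γ)
        + (∫ x, h x ∂γ - ∫ x, gt x ∂γ) := by ring
  calc |∫ ω, gt (F ω) ∂P - ∫ x, gt x ∂γ|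
      ≤ |∫ ω, gt (F ω) ∂P - ∫ ω, h (F ω) ∂P|
        + |∫ ω, h (F ω) ∂P - ∫ x, h x ∂γ|
        + |∫ x, h x ∂γ - ∫ x, gt x ∂γ| := by
        rw [hsplit]
        exact (abs_add_le _ _).trans (add_le_add_left (abs_add_le _ _) _)
    _ ≤ ((∫ ω, max (|F ω| - R) 0 ∂P) + ε / 3)
        + (35 / (16 * ε)) * (B1 + B2)
        + ((∫ x, max (|x| - R) 0 ∂γ) + ε / 3) := by
        exact add_le_add (add_le_add hA hM) hC
    _ = 2 * (ε / 3) + (35 / (16 * ε)) * (B1 + B2)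
        + (∫ ω, max (|F ω| - R) 0 ∂P + ∫ x, max (|x| - R) 0 ∂γ) := by ring

end Stmt9Aux

set_option maxHeartbeats 1000000 in
/-- From bounds over twice differentiable test functions to the
Wasserstein distance: if `|E[h(F)] - E[h(Z)]| ≤ min(4‖h‖_∞, ‖h''‖_∞) B₁ + ‖h''‖_∞ B₂`
for every `h ∈ C_b²` and `4(B₁ + B₂) ≤ 5`, then
`d_W(F, Z) ≤ √(2 (B₁ + B₂) (5 + E|F|))`. -/
theorem stmt9 {Ω : Type*} [MeasurableSpace Ω] (P : Measure Ω)
    [IsProbabilityMeasure P]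
    (F : Ω → ℝ) (hFi : Integrable F P) (hFc : ∫ ω, F ω ∂P = 0)
    (B1 B2 : ℝ) (hB1 : 0 ≤ B1) (hB2 : 0 ≤ B2)
    (hmain : ∀ (h : ℝ → ℝ) (M0 M2 : ℝ), ContDiff ℝ 2 h → (∀ x, |h x| ≤ M0) →
      (∃ C, ∀ x, |deriv h x| ≤ C) → (∀ x, |deriv (deriv h) x| ≤ M2) →
      |∫ ω, h (F ω) ∂P - ∫ x, h x ∂(gaussianReal 0 1)| ≤
        min (4 * M0) M2 * B1 + M2 * B2)
    (hsmall : 4 * (B1 + B2) ≤ 5) :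
    ∀ g : ℝ → ℝ, LipschitzWith 1 g →
      |∫ ω, g (F ω) ∂P - ∫ x, g x ∂(gaussianReal 0 1)| ≤
        Real.sqrt (2 * (B1 + B2) * (5 + ∫ ω, |F ω| ∂P)) := by
  intro g hg
  set γ := gaussianReal 0 1 with hγdef
  set gt : ℝ → ℝ := fun x => g x - g 0 with hgt
  have hgtc : Continuous gt := (hg.continuous).sub continuous_const
  have hlip : ∀ a b, |gt a - gt b| ≤ |a - b| := by
    intro a b
    have := hg.dist_le_mul a b
    rw [Real.dist_eq, Real.dist_eq] at this
    simpa [hgt] using this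
  have hgt0 : gt 0 = 0 := by simp [hgt]
  have hgtabs : ∀ x, |gt x| ≤ |x| := by
    intro x
    have := hlip x 0
    simpa [hgt0] using this
  -- integrability of g ∘ F and g wrt γ
  have hgabs : ∀ x, |g x| ≤ |g 0| + |x| := by
    intro x
    have := hgtabs x
    rw [hgt] at this
    simp only at this
    calc |g x| = |(g x - g 0) + g 0| := by ring_nf
      _ ≤ |g x - g 0| + |g 0| := abs_add_le _ _
      _ ≤ |x| + |g 0| := by linarith [this]
      _ = |g 0| + |x| := by ring
  have hgF_int : Integrable (fun ω => g (F ω)) P := by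
    apply Integrable.mono' ((integrable_const |g 0|).add hFi.abs)
      (hg.continuous.comp_aestronglyMeasurable hFi.1)
    exact Eventually.of_forall fun ω => by
      simpa [Real.norm_eq_abs] using hgabs (F ω)
  have hgγ_int : Integrable g γ := by
    apply Integrable.mono' ((integrable_const |g 0|).add stmt9_gauss_abs_integrable)
      hg.continuous.aestronglyMeasurable
    exact Eventually.of_forall fun x => by
      simpa [Real.norm_eq_abs] using hgabs x
  have hγprob : IsProbabilityMeasure γ := by rw [hγdef]; infer_instance
  -- replace g by gt
  have heqP : ∫ ω, gt (F ω) ∂P = (∫ ω, g (F ω) ∂P) - g 0 := by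
    rw [hgt]
    simp only
    rw [integral_sub hgF_int (integrable_const _), integral_const]
    simp [measure_univ]
  have heqγ : ∫ x, gt x ∂γ = (∫ x, g x ∂γ) - g 0 := by
    rw [hgt]
    simp only
    rw [integral_sub hgγ_int (integrable_const _), integral_const]
    simp [measure_univ]
  have hgoal_eq : |∫ ω, g (F ω) ∂P - ∫ x, g x ∂γ| = |∫ ω, gt (F ω) ∂P - ∫ x, gt x ∂γ| := by
    rw [heqP, heqγ]
    ring_nf
  rw [hgoal_eq]
  -- the ε-family of bounds
  have key : ∀ ε : ℝ, 0 < ε →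
      |∫ ω, gt (F ω) ∂P - ∫ x, gt x ∂γ| ≤ 2 * (ε / 3) + (35 / (16 * ε)) * (B1 + B2) := by
    intro ε hε
    have hstep : ∀ n : ℕ,
        |∫ ω, gt (F ω) ∂P - ∫ x, gt x ∂γ| ≤
          2 * (ε / 3) + (35 / (16 * ε)) * (B1 + B2)
          + ((∫ ω, max (|F ω| - (n:ℝ)) 0 ∂P) + ∫ x, max (|x| - (n:ℝ)) 0 ∂γ) := by
      intro n
      exact stmt9_step P F hFi B1 B2 hB1 hB2 hmain gt hgtc hlip hgt0 hε
        (n:ℝ) (Nat.cast_nonneg n)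
    -- the tails vanish
    have htailF : Tendsto (fun n : ℕ => ∫ ω, max (|F ω| - (n:ℝ)) 0 ∂P) atTop (𝓝 0) := by
      have := tendsto_integral_of_dominated_convergence (μ := P)
        (F := fun (n : ℕ) ω => max (|F ω| - (n:ℝ)) 0) (f := fun _ => (0:ℝ))
        (bound := fun ω => |F ω|)
        (fun n => ((continuous_abs.sub continuous_const).max
          continuous_const).comp_aestronglyMeasurable hFi.1)
        hFi.abs
        (fun n => Eventually.of_forall fun ω => by
          rw [Real.norm_eq_abs, abs_of_nonneg (le_max_right _ _)]
          exact max_le (by linarith [abs_nonneg (F ω), Nat.cast_nonneg (α := ℝ) n])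
            (abs_nonneg _))
        (Eventually.of_forall fun ω => by
          have hev : ∀ᶠ n : ℕ in atTop, max (|F ω| - (n:ℝ)) 0 = 0 := by
            rw [eventually_atTop]
            refine ⟨⌈|F ω|⌉₊, fun n hn => max_eq_right ?_⟩
            have h1 : |F ω| ≤ (⌈|F ω|⌉₊ : ℝ) := Nat.le_ceil _
            have h2 : ((⌈|F ω|⌉₊ : ℕ) : ℝ) ≤ (n : ℝ) := by exact_mod_cast hn
            linarith
          exact Tendsto.congr' (hev.mono fun n h => h.symm) tendsto_const_nhds)
      simpa using this
    have htailγ : Tendsto (fun n : ℕ => ∫ x, max (|x| - (n:ℝ)) 0 ∂γ) atTop (𝓝 0) := by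
      have := tendsto_integral_of_dominated_convergence (μ := γ)
        (F := fun (n : ℕ) (x : ℝ) => max (|x| - (n:ℝ)) 0) (f := fun _ => (0:ℝ))
        (bound := fun x => |x|)
        (fun n => ((continuous_abs.sub continuous_const).max
          continuous_const).aestronglyMeasurable)
        stmt9_gauss_abs_integrable
        (fun n => Eventually.of_forall fun x => by
          rw [Real.norm_eq_abs, abs_of_nonneg (le_max_right _ _)]
          exact max_le (by linarith [abs_nonneg x, Nat.cast_nonneg (α := ℝ) n])
            (abs_nonneg _))
        (Eventually.of_forall fun x => by
          have hev : ∀ᶠ n : ℕ in atTop, max (|x| - (n:ℝ)) 0 = 0 := by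
            rw [eventually_atTop]
            refine ⟨⌈|x|⌉₊, fun n hn => max_eq_right ?_⟩
            have h1 : |x| ≤ (⌈|x|⌉₊ : ℝ) := Nat.le_ceil _
            have h2 : ((⌈|x|⌉₊ : ℕ) : ℝ) ≤ (n : ℝ) := by exact_mod_cast hn
            linarith
          exact Tendsto.congr' (hev.mono fun n h => h.symm) tendsto_const_nhds)
      simpa using this
    have hsum : Tendsto (fun n : ℕ =>
        2 * (ε / 3) + (35 / (16 * ε)) * (B1 + B2)
        + ((∫ ω, max (|F ω| - (n:ℝ)) 0 ∂P) + ∫ x, max (|x| - (n:ℝ)) 0 ∂γ)) atTop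
        (𝓝 (2 * (ε / 3) + (35 / (16 * ε)) * (B1 + B2))) := by
      have h2 := (htailF.add htailγ).const_add
        (2 * (ε / 3) + (35 / (16 * ε)) * (B1 + B2))
      simpa using h2
    exact ge_of_tendsto hsum (Eventually.of_forall hstep)
  -- conclude
  have hm : (0:ℝ) ≤ ∫ ω, |F ω| ∂P := integral_nonneg fun ω => abs_nonneg _
  rcases eq_or_lt_of_le (by linarith : (0:ℝ) ≤ B1 + B2) with hΔ | hΔ
  · -- B1 + B2 = 0
    have hle0 : |∫ ω, gt (F ω) ∂P - ∫ x, gt x ∂γ| ≤ 0 := by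
      apply le_of_forall_pos_le_add
      intro δ hδ
      have := key ((3/2) * δ) (by linarith)
      rw [← hΔ] at this
      calc |∫ ω, gt (F ω) ∂P - ∫ x, gt x ∂γ|
          ≤ 2 * ((3/2) * δ / 3) + (35 / (16 * ((3/2) * δ))) * 0 := this
        _ = δ := by ring
        _ = 0 + δ := by ring
    exact hle0.trans (Real.sqrt_nonneg _)
  · -- B1 + B2 > 0
    set Δ := B1 + B2 with hΔdef
    have hsq : (0:ℝ) < Real.sqrt Δ := Real.sqrt_pos.mpr hΔ
    have hkey := key (Real.sqrt Δ) hsq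
    have heval : 2 * (Real.sqrt Δ / 3) + (35 / (16 * Real.sqrt Δ)) * Δ
        = (137 / 48) * Real.sqrt Δ := by
      have hdiv : Δ / Real.sqrt Δ = Real.sqrt Δ := Real.div_sqrt
      field_simp
      nlinarith [Real.sq_sqrt hΔ.le, hsq]
    rw [heval] at hkey
    refine hkey.trans ?_
    have h1 : (137 / 48 : ℝ) * Real.sqrt Δ = Real.sqrt ((137 / 48) ^ 2 * Δ) := by
      rw [Real.sqrt_mul (by positivity), Real.sqrt_sq (by norm_num)]
    rw [h1]
    apply Real.sqrt_le_sqrt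
    have hnum : ((137:ℝ) / 48) ^ 2 ≤ 10 := by norm_num
    have hfin : (137 / 48 : ℝ) ^ 2 * Δ ≤ 10 * Δ :=
      mul_le_mul_of_nonneg_right hnum hΔ.le
    have h2 : (10:ℝ) * Δ ≤ 2 * Δ * (5 + ∫ ω, |F ω| ∂P) := by nlinarith [hΔ.le, hm]
    nlinarith [hfin, h2]
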